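/- For μ,ν ∈ (0,1) with μ ≠ ν, define μ(δ) = (μ − δ(μ−ν))/(1 − δ(μ−ν)) and ν(δ) = ν/(1 − δ(μ−ν)) for δ ∈ [0,1). Then the function δ ↦ H(δ) := (ν/(1−μ+ν))·h(μ(δ)) + ((1−μ)/(1−μ+ν))·h(ν(δ)) is strictly increasing on [0,1). -/

import Mathlib

set_option maxHeartbeats 1000000


/-- The binary entropy function (natural logarithm). -/
noncomputable def binEnt (a : ℝ) : ℝ := -(a * Real.log a) - (1 - a) * Real.log (1 - a)

lemma binEnt_eq_binEntropy (a : ℝ) : binEnt a = Real.binEntropy a := by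
  simp [binEnt, Real.binEntropy, Real.log_inv]; ring

/-- For `μ,ν ∈ (0,1)` with `μ ≠ ν`, the entropy rate
`H(δ) = (ν/(1-μ+ν)) h(μ(δ)) + ((1-μ)/(1-μ+ν)) h(ν(δ))` of the deletion-transformed machine
`g_{(μ,ν)}(δ)`, with `μ(δ) = (μ - δ(μ-ν))/(1 - δ(μ-ν))` and `ν(δ) = ν/(1 - δ(μ-ν))`,
is strictly increasing on `[0,1)`. -/
theorem stmt_8 (μ ν : ℝ) (hμ : μ ∈ Set.Ioo (0 : ℝ) 1) (hν : ν ∈ Set.Ioo (0 : ℝ) 1)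
    (hne : μ ≠ ν) :
    StrictMonoOn
      (fun δ : ℝ =>
        (ν / (1 - μ + ν)) * binEnt ((μ - δ * (μ - ν)) / (1 - δ * (μ - ν))) +
          ((1 - μ) / (1 - μ + ν)) * binEnt (ν / (1 - δ * (μ - ν))))
      (Set.Ico (0 : ℝ) 1) := by
  obtain ⟨hμ0, hμ1⟩ := hμ
  obtain ⟨hν0, hν1⟩ := hν
  intro x hx y hy hxy
  obtain ⟨hx0, hx1⟩ := hx
  obtain ⟨hy0, hy1⟩ := hy
  simp only [binEnt_eq_binEntropy]
  set h := Real.binEntropy with hh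
  -- basic positivity
  have hc1 : (0:ℝ) < 1 - (μ - ν) := by linarith
  have hSum : (0:ℝ) < 1 - μ + ν := by linarith
  have hDx : (0:ℝ) < 1 - x * (μ - ν) := by nlinarith [mul_nonneg hx0 hc1.le]
  have hDy : (0:ℝ) < 1 - y * (μ - ν) := by
    nlinarith [mul_nonneg (le_trans hx0 hxy.le) hc1.le]
  set P : ℝ := ν / (1 - μ + ν) with hP
  set Q : ℝ := (1 - μ) / (1 - μ + ν) with hQ
  have hPpos : 0 < P := div_pos hν0 hSum
  have hQpos : 0 < Q := div_pos (by linarith) hSum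
  have hPQ : P + Q = 1 := by
    rw [hP, hQ, ← add_div]
    field_simp
    ring
  set a1 : ℝ := (μ - x * (μ - ν)) / (1 - x * (μ - ν)) with ha1
  set b1 : ℝ := ν / (1 - x * (μ - ν)) with hb1
  set a2 : ℝ := (μ - y * (μ - ν)) / (1 - y * (μ - ν)) with ha2
  set b2 : ℝ := ν / (1 - y * (μ - ν)) with hb2
  -- membership facts
  have ha1m : a1 ∈ Set.Icc (0:ℝ) 1 := by
    constructor
    · apply div_nonneg _ hDx.le; nlinarith [mul_nonneg hx0 hν0.le]
    · rw [div_le_one hDx]; nlinarith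
  have hb1m : b1 ∈ Set.Icc (0:ℝ) 1 := by
    constructor
    · exact div_nonneg hν0.le hDx.le
    · rw [div_le_one hDx]; nlinarith [mul_nonneg hx0 hν0.le]
  have hPm : P ∈ Set.Icc (0:ℝ) 1 := by
    constructor
    · exact hPpos.le
    · rw [hP, div_le_one hSum]; linarith
  -- the interpolation parameter
  set L : ℝ := 1 - ((1 - y) * (1 - x * (μ - ν))) / ((1 - x) * (1 - y * (μ - ν))) with hL
  have hxden : (0:ℝ) < (1 - x) * (1 - y * (μ - ν)) := mul_pos (by linarith) hDy
  have hL1 : L < 1 := by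
    have h1 : 0 < ((1 - y) * (1 - x * (μ - ν))) / ((1 - x) * (1 - y * (μ - ν))) :=
      div_pos (mul_pos (by linarith) hDx) hxden
    rw [hL]; linarith
  have hL0 : 0 < L := by
    have hlt : ((1 - y) * (1 - x * (μ - ν))) / ((1 - x) * (1 - y * (μ - ν))) < 1 := by
      rw [div_lt_one hxden]
      nlinarith [mul_pos (sub_pos.2 hxy) hc1]
    rw [hL]; linarith
  -- key affine identities
  have hI1 : a2 = L * P + (1 - L) * a1 := by
    rw [ha2, hL, hP, ha1]
    have hx1' : (1 - x) ≠ 0 := by linarith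
    have e : ∀ z : ℝ, (1 - (1 - ((1 - y) * (1 - x * (μ - ν))) / ((1 - x) * (1 - y * (μ - ν))))) * (z / (1 - x * (μ - ν))) = ((1 - y) * z) / ((1 - x) * (1 - y * (μ - ν))) := by
      intro z; field_simp; ring
    rw [e]
    field_simp
    ring
  have hI2 : b2 = L * P + (1 - L) * b1 := by
    rw [hb2, hL, hP, hb1]
    have hx1' : (1 - x) ≠ 0 := by linarith
    have e : ∀ z : ℝ, (1 - (1 - ((1 - y) * (1 - x * (μ - ν))) / ((1 - x) * (1 - y * (μ - ν))))) * (z / (1 - x * (μ - ν))) = ((1 - y) * z) / ((1 - x) * (1 - y * (μ - ν))) := by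
      intro z; field_simp; ring
    rw [e]
    field_simp
    ring
  have hI3 : P = P * a1 + Q * b1 := by
    rw [hP, hQ, ha1, hb1]
    field_simp
    ring
  -- a1 ≠ b1
  have hne' : a1 ≠ b1 := by
    rw [ha1, hb1]
    intro hEq
    have h2a : (μ - x * (μ - ν)) * (1 - x * (μ - ν)) = ν * (1 - x * (μ - ν)) :=
      (div_eq_div_iff (ne_of_gt hDx) (ne_of_gt hDx)).1 hEq
    have h2 : μ - x * (μ - ν) = ν := mul_right_cancel₀ (ne_of_gt hDx) h2a
    have h3 : (μ - ν) * (1 - x) = 0 := by linarith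
    rcases mul_eq_zero.1 h3 with h4 | h4
    · exact hne (by linarith)
    · linarith
  -- concavity facts
  have hSC := Real.strictConcave_binEntropy
  have hconc := hSC.concaveOn
  have hA : L * h P + (1 - L) * h a1 ≤ h a2 := by
    have := hconc.2 hPm ha1m hL0.le (by linarith : (0:ℝ) ≤ 1 - L) (by ring)
    simpa [smul_eq_mul, hI1] using this
  have hB : L * h P + (1 - L) * h b1 ≤ h b2 := by
    have := hconc.2 hPm hb1m hL0.le (by linarith : (0:ℝ) ≤ 1 - L) (by ring)
    simpa [smul_eq_mul, hI2] using this
  have hC : P * h a1 + Q * h b1 < h P := by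
    have := hSC.2 ha1m hb1m hne' hPpos hQpos hPQ
    simpa [smul_eq_mul, ← hI3] using this
  have e1 : P * h a2 + Q * h b2 ≥
      P * (L * h P + (1 - L) * h a1) + Q * (L * h P + (1 - L) * h b1) := by
    have t1 := mul_le_mul_of_nonneg_left hA hPpos.le
    have t2 := mul_le_mul_of_nonneg_left hB hQpos.le
    linarith
  have e2 : P * (L * h P + (1 - L) * h a1) + Q * (L * h P + (1 - L) * h b1)
      = L * h P + (1 - L) * (P * h a1 + Q * h b1) := by
    linear_combination (h P * L) * hPQ
  have e3 : L * (P * h a1 + Q * h b1) < L * h P := mul_lt_mul_of_pos_left hC hL0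
  calc P * h a1 + Q * h b1
      = L * (P * h a1 + Q * h b1) + (1 - L) * (P * h a1 + Q * h b1) := by ring
    _ < L * h P + (1 - L) * (P * h a1 + Q * h b1) := by linarith
    _ = P * (L * h P + (1 - L) * h a1) + Q * (L * h P + (1 - L) * h b1) := by
        rw [e2]
    _ ≤ P * h a2 + Q * h b2 := e1
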